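/- Let f₂ : [0,2] → ℝ be defined by f₂(x) = x² for x ≠ 1 and f₂(1) = −1, and let L be the linear functional on the span of {1, x, f₂} represented by the measure λ + (8/3)·δ₁ on [0,2], where λ is Lebesgue measure. Then there is no continuous function ρ : [0,2] → ℝ with ρ ≥ 0 such that L(g) = ∫_0^2 g(x)·ρ(x) dx for all g in the span of {1, x, f₂}. -/

import Mathlib

open MeasureTheory Filter Real
open scoped ENNReal

/-- The moment functional on `span {1, x, f₂}` represented by `λ + (8/3)·δ₁` on `[0,2]`
has no nonnegative continuous density with respect to Lebesgue measure. -/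
theorem no_continuous_density :
    ¬ ∃ ρ : ℝ → ℝ, ContinuousOn ρ (Set.Icc 0 2) ∧ (∀ x ∈ Set.Icc (0:ℝ) 2, 0 ≤ ρ x) ∧
      ∀ g ∈ Submodule.span ℝ ({(fun _ => (1:ℝ)), (fun x => x),
          (fun x => if x = 1 then (-1 : ℝ) else x ^ 2)} : Set (ℝ → ℝ)),
        (∫ x, g x ∂((volume.restrict (Set.Icc (0:ℝ) 2)) + ((8:ℝ≥0∞)/3) • Measure.dirac 1))
          = ∫ x in (0:ℝ)..2, g x * ρ x := by
  rintro ⟨ρ, hρc, hρ0, hL⟩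
  set f₂ : ℝ → ℝ := fun x => if x = 1 then (-1 : ℝ) else x ^ 2 with hf₂def
  -- f₂ = x² a.e. (volume)
  have haef : f₂ =ᵐ[volume] fun x => x ^ 2 := by
    refine ae_iff.2 (measure_mono_null (fun x hx => ?_) (measure_singleton (1:ℝ)))
    simp only [Set.mem_setOf_eq, hf₂def] at hx
    by_contra h
    rw [Set.mem_singleton_iff] at h
    exact hx (by simp [if_neg h])
  have hc83 : ((8:ℝ≥0∞)/3).toReal = 8/3 := by
    rw [ENNReal.toReal_div]; norm_num
  have hc83ne0 : ((8:ℝ≥0∞)/3) ≠ 0 := by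
    simp [ENNReal.div_eq_zero_iff]
  have hc83netop : ((8:ℝ≥0∞)/3) ≠ ⊤ := by
    simp [ENNReal.div_eq_top]
  -- f₂ is the third generator
  have hmem2 : f₂ ∈ ({(fun _ => (1:ℝ)), (fun x => x), f₂} : Set (ℝ → ℝ)) := by
    right; right; rfl
  have h2 := hL f₂ (Submodule.subset_span hmem2)
  have h1 := hL (fun _ => (1:ℝ)) (Submodule.subset_span (Set.mem_insert _ _))
  -- integrability over the restricted Lebesgue measure
  have hint2 : Integrable f₂ (volume.restrict (Set.Icc (0:ℝ) 2)) :=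
    ((continuous_pow 2).integrableOn_Icc).congr (ae_restrict_of_ae haef.symm)
  -- integrability over the dirac part
  have haed : f₂ =ᵐ[Measure.dirac (1:ℝ)] fun _ => (-1:ℝ) := by
    rw [Filter.EventuallyEq, MeasureTheory.ae_dirac_eq]
    simp [hf₂def]
  have hintd : Integrable f₂ (((8:ℝ≥0∞)/3) • Measure.dirac 1) :=
    (integrable_smul_measure hc83ne0 hc83netop).2
      ((integrable_const (-1:ℝ)).congr haed.symm)
  -- compute L(f₂) = 0
  have hkey : (∫ x, f₂ x ∂((volume.restrict (Set.Icc (0:ℝ) 2))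
      + ((8:ℝ≥0∞)/3) • Measure.dirac 1)) = 0 := by
    rw [integral_add_measure hint2 hintd, integral_smul_measure, integral_dirac]
    have hlebint : (∫ x in Set.Icc (0:ℝ) 2, f₂ x) = 8/3 := by
      rw [integral_congr_ae (ae_restrict_of_ae haef),
        MeasureTheory.integral_Icc_eq_integral_Ioc,
        ← intervalIntegral.integral_of_le (by norm_num : (0:ℝ) ≤ 2),
        integral_pow]
      norm_num
    rw [hlebint, hc83]
    simp [hf₂def]
  -- so ∫₀² f₂ ρ = 0, hence ∫ over Ioc of x² ρ = 0
  have hprod_ae : (fun x => f₂ x * ρ x) =ᵐ[volume] fun x => x ^ 2 * ρ x :=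
    haef.mul Filter.EventuallyEq.rfl
  have hintprod : IntegrableOn (fun x => x ^ 2 * ρ x) (Set.Ioc (0:ℝ) 2) := by
    refine (ContinuousOn.integrableOn_Icc ?_).mono_set Set.Ioc_subset_Icc_self
    exact ((continuous_pow 2).continuousOn).mul hρc
  have hzero : (∫ x in Set.Ioc (0:ℝ) 2, x ^ 2 * ρ x) = 0 := by
    rw [← integral_congr_ae (ae_restrict_of_ae hprod_ae),
      ← intervalIntegral.integral_of_le (by norm_num : (0:ℝ) ≤ 2)]
    exact h2.symm ▸ hkey.symm ▸ rfl
  have hnonneg : 0 ≤ᵐ[volume.restrict (Set.Ioc (0:ℝ) 2)] fun x => x ^ 2 * ρ x := by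
    refine (ae_restrict_iff' measurableSet_Ioc).2 (ae_of_all _ fun x hx => ?_)
    exact mul_nonneg (sq_nonneg x) (hρ0 x (Set.Ioc_subset_Icc_self hx))
  have haez : (fun x => x ^ 2 * ρ x) =ᵐ[volume.restrict (Set.Ioc (0:ℝ) 2)] 0 :=
    (integral_eq_zero_iff_of_nonneg_ae hnonneg hintprod).1 hzero
  -- hence ρ = 0 a.e. on (0,2]
  have hρae : ρ =ᵐ[volume.restrict (Set.Ioc (0:ℝ) 2)] 0 := by
    filter_upwards [haez, ae_restrict_mem measurableSet_Ioc] with x hx hmem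
    have hxne : x ≠ 0 := ne_of_gt hmem.1
    simpa using (mul_eq_zero.1 hx).resolve_left (pow_ne_zero 2 hxne)
  -- L(1) computation gives contradiction
  have hrhs : (∫ x in (0:ℝ)..2, (fun _ => (1:ℝ)) x * ρ x) = 0 := by
    rw [intervalIntegral.integral_of_le (by norm_num : (0:ℝ) ≤ 2)]
    refine integral_eq_zero_of_ae ?_
    filter_upwards [hρae] with x hx
    simp [hx]
  have hintc1 : Integrable (fun _ => (1:ℝ)) (volume.restrict (Set.Icc (0:ℝ) 2)) := by
    refine integrableOn_const ?_
    rw [Real.volume_Icc]; norm_num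
  have hintc2 : Integrable (fun _ : ℝ => (1:ℝ)) (((8:ℝ≥0∞)/3) • Measure.dirac (1:ℝ)) :=
    (integrable_smul_measure hc83ne0 hc83netop).2 (integrable_const (1:ℝ))
  have hlhs : (∫ x, (fun _ => (1:ℝ)) x ∂((volume.restrict (Set.Icc (0:ℝ) 2))
      + ((8:ℝ≥0∞)/3) • Measure.dirac 1)) = 2 + 8/3 := by
    rw [integral_add_measure hintc1 hintc2, integral_smul_measure, integral_dirac]
    rw [setIntegral_const, hc83]
    rw [Real.volume_real_Icc]
    norm_num
  rw [h1, hrhs] at hlhs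
  norm_num at hlhs
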